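/- arXiv:1408.2280 — 2 statements merged into one kernel-verified Lean document; each statement's English description precedes it below -/
import Mathlib

section
/- Let m, n ≥ 0, let λ ∈ Λ_{n+1} with λ ⊂ m^{n+1}, and let μ ∈ Λ_n with μ ⊂ m^n. Then (n^m − μ′) ∼_m ((n+1)^m − λ′) holds in Λ_m if and only if μ ⪯ λ (with μ regarded as an element of Λ_{n+1}). -/
open Finset

/-- `l` is a partition with at most `N` parts: `l 1 ≥ l 2 ≥ ⋯ ≥ l N (≥ 0)`. -/
def IsPartition {N : ℕ} (l : Fin N → ℕ) : Prop :=
  ∀ i j : Fin N, i ≤ j → l j ≤ l i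

/-- Containment of diagrams: `μ ⊂ l`. -/
def SubDiag {N : ℕ} (μ l : Fin N → ℕ) : Prop := ∀ j, μ j ≤ l j

/-- The weight `|l| = l 1 + ⋯ + l N`. -/
def wt {N : ℕ} (l : Fin N → ℕ) : ℕ := ∑ j, l j

/-- The skew diagram `l/μ` is a vertical strip: `μ j ≤ l j ≤ μ j + 1` for all `j`. -/
def VStrip {N : ℕ} (l μ : Fin N → ℕ) : Prop :=
  ∀ j, μ j ≤ l j ∧ l j ≤ μ j + 1

/-- The skew diagram `l/μ` is a horizontal strip:
`l 1 ≥ μ 1 ≥ l 2 ≥ μ 2 ≥ ⋯ ≥ l N ≥ μ N` (interlacing). -/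
def HStrip {N : ℕ} (l μ : Fin N → ℕ) : Prop :=
  (∀ j, μ j ≤ l j) ∧ ∀ (j : ℕ) (h : j + 1 < N), l ⟨j + 1, h⟩ ≤ μ ⟨j, by omega⟩

/-- `|l/μ| = |l| - |μ|` (for `μ ⊂ l`). -/
def skewWt {N : ℕ} (l μ : Fin N → ℕ) : ℕ := ∑ j, (l j - μ j)

/-- The proximity relation `μ ∼_r l`: there is a partition `ν ⊂ l, ν ⊂ μ` such that
`l/ν` and `μ/ν` are vertical strips with `|l/ν| + |μ/ν| ≤ r`. -/
def simRel {N : ℕ} (r : ℕ) (μ l : Fin N → ℕ) : Prop :=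
  ∃ ν : Fin N → ℕ, IsPartition ν ∧ SubDiag ν l ∧ SubDiag ν μ ∧
    VStrip l ν ∧ VStrip μ ν ∧ skewWt l ν + skewWt μ ν ≤ r

/-- `μ ⪯ l`: there is a partition `ν` with `μ ⊂ ν ⊂ l` such that `l/ν` and `ν/μ`
are horizontal strips. -/
def preceq {N : ℕ} (μ l : Fin N → ℕ) : Prop :=
  ∃ ν : Fin N → ℕ, IsPartition ν ∧ SubDiag μ ν ∧ SubDiag ν l ∧
    HStrip l ν ∧ HStrip ν μ

/-- The conjugate partition `l′ ∈ Λ_m` (for `l ∈ Λ_N` with `l 1 ≤ m`):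
`l′ i = #{j : l j ≥ i}` (here `i : Fin m` is 0-based, so `i+1`-th row). -/
def conjP {N : ℕ} (m : ℕ) (l : Fin N → ℕ) : Fin m → ℕ :=
  fun i => (Finset.univ.filter (fun j : Fin N => (i : ℕ) + 1 ≤ l j)).card

/-- The rectangular partition `m^N ∈ Λ_N`. -/
def rectP (m N : ℕ) : Fin N → ℕ := fun _ => m

/-- The complement `m^N − l` of `l ⊂ m^N` in `Λ_N`: `(m^N − l) j = m − l (N+1−j)`
(1-based), i.e. `m - l j.rev` (0-based). -/
def complP {N : ℕ} (m : ℕ) (l : Fin N → ℕ) : Fin N → ℕ :=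
  fun j => m - l j.rev

/-- The natural embedding `Λ_N ↪ Λ_{N+1}` by appending a zero part. -/
def extendP {N : ℕ} (l : Fin N → ℕ) : Fin (N + 1) → ℕ := Fin.snoc l 0

/-- Helper: bound on the conjugate partition. -/
lemma conj_le_card {N m : ℕ} (l : Fin N → ℕ) (c : Fin m) : conjP m l c ≤ N := by
  unfold conjP
  exact (Finset.card_filter_le _ _).trans (by simp)

/-- Helper: the conjugate is antitone in the column index. -/
lemma conj_antitone {N m : ℕ} (l : Fin N → ℕ) {c c' : Fin m} (h : c ≤ c') :
    conjP m l c' ≤ conjP m l c := by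
  unfold conjP
  apply Finset.card_le_card
  intro j hj
  simp only [Finset.mem_filter, Finset.mem_univ, true_and] at *
  have hcc : (c : ℕ) ≤ (c' : ℕ) := h
  omega

/-- Helper: membership characterization for the conjugate of a partition. -/
lemma conj_lt_iff {N m : ℕ} {l : Fin N → ℕ} (hl : IsPartition l) (c : Fin m) (j : Fin N) :
    (j : ℕ) < conjP m l c ↔ (c : ℕ) + 1 ≤ l j := by
  constructor
  · intro h
    by_contra hc
    push_neg at hc
    have hsub : (Finset.univ.filter (fun i : Fin N => (c : ℕ) + 1 ≤ l i)) ⊆ Finset.Iio j := by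
      intro i hi
      simp only [Finset.mem_filter] at hi
      simp only [Finset.mem_Iio]
      by_contra hji
      push_neg at hji
      exact absurd (le_trans hi.2 (hl j i hji)) (by omega)
    have hcard := Finset.card_le_card hsub
    rw [Fin.card_Iio] at hcard
    unfold conjP at h
    omega
  · intro h
    have hsub : Finset.Iic j ⊆ Finset.univ.filter (fun i : Fin N => (c : ℕ) + 1 ≤ l i) := by
      intro i hi
      simp only [Finset.mem_Iic] at hi
      simp only [Finset.mem_filter, Finset.mem_univ, true_and]
      exact le_trans h (hl i j hi)
    have hcard := Finset.card_le_card hsub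
    rw [Fin.card_Iic] at hcard
    unfold conjP
    omega

/-- A sequence that decreases at each adjacent step is a partition. -/
lemma isPartition_of_adj {N : ℕ} {l : Fin N → ℕ}
    (h : ∀ (k : ℕ) (hk : k + 1 < N), l ⟨k + 1, hk⟩ ≤ l ⟨k, by omega⟩) : IsPartition l := by
  have key : ∀ (d : ℕ) (i : Fin N) (hd : (i : ℕ) + d < N), l ⟨(i : ℕ) + d, hd⟩ ≤ l i := by
    intro d
    induction d with
    | zero => intro i hd; exact le_rfl
    | succ d ih =>
        intro i hd
        have h1 : (i : ℕ) + d < N := by omega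
        exact le_trans (h ((i : ℕ) + d) hd) (ih i h1)
  intro i j hij
  have hij' : (i : ℕ) ≤ (j : ℕ) := hij
  have hj : j = ⟨(i : ℕ) + ((j : ℕ) - (i : ℕ)), by omega⟩ := by
    apply Fin.ext; simp; omega
  rw [hj]
  exact key _ i _

lemma extendP_lt {N : ℕ} (l : Fin N → ℕ) (j : Fin (N + 1)) (h : (j : ℕ) < N) :
    extendP l j = l ⟨(j : ℕ), h⟩ := by
  have e : extendP l (Fin.castSucc ⟨(j : ℕ), h⟩) = l ⟨(j : ℕ), h⟩ := Fin.snoc_castSucc _ _ _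
  have hj : Fin.castSucc ⟨(j : ℕ), h⟩ = j := by apply Fin.ext; rfl
  rw [hj] at e
  exact e

lemma extendP_eq {N : ℕ} (l : Fin N → ℕ) (j : Fin (N + 1)) (h : (j : ℕ) = N) :
    extendP l j = 0 := by
  have hj : j = Fin.last N := by apply Fin.ext; simpa using h
  rw [hj]
  exact Fin.snoc_last _ _

lemma isPartition_extend {N : ℕ} {l : Fin N → ℕ} (hl : IsPartition l) :
    IsPartition (extendP l) := by
  apply isPartition_of_adj
  intro k hk
  by_cases h : k + 1 < N
  · rw [extendP_lt l ⟨k + 1, hk⟩ h, extendP_lt l ⟨k, by omega⟩ (show k < N by omega)]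
    exact hl ⟨k, by omega⟩ ⟨k + 1, h⟩ (Fin.mk_le_mk.mpr (by omega))
  · rw [extendP_eq l ⟨k + 1, hk⟩ (show k + 1 = N by omega)]
    exact Nat.zero_le _

/-- The shift of a partition: drop the first part, append a zero. -/
def shiftP {N : ℕ} (l : Fin (N + 1) → ℕ) : Fin (N + 1) → ℕ :=
  extendP (fun i : Fin N => l i.succ)

lemma shiftP_lt {N : ℕ} (l : Fin (N + 1) → ℕ) (j : Fin (N + 1)) (h : (j : ℕ) < N) :
    shiftP l j = l ⟨(j : ℕ) + 1, by omega⟩ := by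
  unfold shiftP
  rw [extendP_lt _ j h]
  congr 1

lemma shiftP_eq {N : ℕ} (l : Fin (N + 1) → ℕ) (j : Fin (N + 1)) (h : (j : ℕ) = N) :
    shiftP l j = 0 := extendP_eq _ j h

lemma isPartition_shiftP {N : ℕ} {l : Fin (N + 1) → ℕ} (hl : IsPartition l) :
    IsPartition (shiftP l) := by
  apply isPartition_extend
  intro i j hij
  exact hl i.succ j.succ (Fin.succ_le_succ_iff.mpr hij)

lemma shiftP_le {N : ℕ} {l : Fin (N + 1) → ℕ} (hl : IsPartition l) (j : Fin (N + 1)) :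
    shiftP l j ≤ l j := by
  by_cases h : (j : ℕ) < N
  · rw [shiftP_lt l j h]
    exact hl j ⟨(j : ℕ) + 1, by omega⟩ (Fin.le_def.mpr (by simp))
  · rw [shiftP_eq l j (by omega)]
    exact Nat.zero_le _

/-- Column condition ↔ containment. -/
lemma dual1 {m n : ℕ} {lam : Fin (n + 1) → ℕ} (hlam : IsPartition lam)
    {mu : Fin n → ℕ} (hmu : IsPartition mu) (hmub : SubDiag mu (rectP m n)) :
    (∀ c : Fin m, conjP m mu c ≤ conjP m lam c) ↔ ∀ j, extendP mu j ≤ lam j := by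
  constructor
  · intro hc j
    by_cases hj : (j : ℕ) < n
    · rw [extendP_lt mu j hj]
      by_cases h0 : mu ⟨(j : ℕ), hj⟩ = 0
      · simp [h0]
      · have hbm : mu ⟨(j : ℕ), hj⟩ ≤ m := hmub ⟨(j : ℕ), hj⟩
        set c : Fin m := ⟨mu ⟨(j : ℕ), hj⟩ - 1, by omega⟩ with hcdef
        have h1 : ((⟨(j : ℕ), hj⟩ : Fin n) : ℕ) < conjP m mu c := by
          rw [conj_lt_iff hmu]
          simp only [hcdef]
          omega
        have h2 : (j : ℕ) < conjP m lam c := lt_of_lt_of_le h1 (hc c)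
        have h3 := (conj_lt_iff hlam c j).1 h2
        simp only [hcdef] at h3
        omega
    · rw [extendP_eq mu j (by omega)]
      exact Nat.zero_le _
  · intro hsub c
    by_cases h0 : conjP m mu c = 0
    · omega
    · have hle : conjP m mu c ≤ n := conj_le_card mu c
      set j : Fin n := ⟨conjP m mu c - 1, by omega⟩ with hjdef
      have h1 : (j : ℕ) < conjP m mu c := by
        simp only [hjdef]; omega
      have h2 := (conj_lt_iff hmu c j).1 h1
      have h3 : (c : ℕ) + 1 ≤ lam j.castSucc := by
        refine le_trans h2 (le_trans (le_of_eq ?_) (hsub j.castSucc))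
        rw [extendP_lt mu j.castSucc (by simp [hjdef]; omega)]
        exact congrArg mu (by apply Fin.ext; rfl)
      have h4 := (conj_lt_iff hlam c j.castSucc).2 h3
      simp only [Fin.coe_castSucc, hjdef] at h4
      omega

/-- Column condition ↔ two-row jump condition. -/
lemma dual2 {m n : ℕ} {lam : Fin (n + 1) → ℕ} (hlam : IsPartition lam)
    (hlamb : SubDiag lam (rectP m (n + 1)))
    {mu : Fin n → ℕ} (hmu : IsPartition mu) :
    (∀ c : Fin m, conjP m lam c ≤ conjP m mu c + 2) ↔
      ∀ (j : ℕ) (h : j + 2 < n + 1), lam ⟨j + 2, h⟩ ≤ mu ⟨j, by omega⟩ := by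
  constructor
  · intro hc j h
    by_cases h0 : lam ⟨j + 2, h⟩ = 0
    · simp [h0]
    · have hbm : lam ⟨j + 2, h⟩ ≤ m := hlamb ⟨j + 2, h⟩
      set c : Fin m := ⟨lam ⟨j + 2, h⟩ - 1, by omega⟩ with hcdef
      have h1 : ((⟨j + 2, h⟩ : Fin (n + 1)) : ℕ) < conjP m lam c := by
        rw [conj_lt_iff hlam]
        simp only [hcdef]
        omega
      have h1' : j + 2 < conjP m lam c := h1
      have h2 : (j : ℕ) < conjP m mu c := by have := hc c; omega
      have h3 := (conj_lt_iff hmu c ⟨j, by omega⟩).1 h2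
      simp only [hcdef] at h3
      omega
  · intro hj c
    by_cases h3 : conjP m lam c ≤ 2
    · omega
    · have hle : conjP m lam c ≤ n + 1 := conj_le_card lam c
      set K := conjP m lam c with hK
      have h1 : (K - 1 : ℕ) < K := by omega
      have h2 : (c : ℕ) + 1 ≤ lam ⟨K - 1, by omega⟩ :=
        (conj_lt_iff hlam c ⟨K - 1, by omega⟩).1 h1
      have h4 : lam ⟨(K - 3) + 2, by omega⟩ ≤ mu ⟨K - 3, by omega⟩ := hj (K - 3) (by omega)
      have he : lam ⟨(K - 3) + 2, by omega⟩ = lam ⟨K - 1, by omega⟩ := by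
        congr 1; apply Fin.ext; simp; omega
      rw [he] at h4
      have h5 : ((⟨K - 3, by omega⟩ : Fin n) : ℕ) < conjP m mu c :=
        (conj_lt_iff hmu c ⟨K - 3, by omega⟩).2 (le_trans h2 h4)
      have h5' : K - 3 < conjP m mu c := h5
      omega

/-- The two column conditions are equivalent to `preceq`. -/
lemma col_iff_preceq {m n : ℕ} {lam : Fin (n + 1) → ℕ} (hlam : IsPartition lam)
    (hlamb : SubDiag lam (rectP m (n + 1)))
    {mu : Fin n → ℕ} (hmu : IsPartition mu) (hmub : SubDiag mu (rectP m n)) :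
    (∀ c : Fin m, conjP m mu c ≤ conjP m lam c ∧ conjP m lam c ≤ conjP m mu c + 2) ↔
      preceq (extendP mu) lam := by
  constructor
  · intro hc
    have hsub : ∀ j, extendP mu j ≤ lam j :=
      (dual1 hlam hmu hmub).1 (fun c => (hc c).1)
    have hjump : ∀ (j : ℕ) (h : j + 2 < n + 1), lam ⟨j + 2, h⟩ ≤ mu ⟨j, by omega⟩ :=
      (dual2 hlam hlamb hmu).1 (fun c => (hc c).2)
    have hmuP : IsPartition (extendP mu) := isPartition_extend hmu
    have hshP : IsPartition (shiftP lam) := isPartition_shiftP hlam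
    refine ⟨fun j => max (extendP mu j) (shiftP lam j), ?_, fun j => le_max_left _ _,
      fun j => max_le (hsub j) (shiftP_le hlam j), ⟨?_, ?_⟩, ⟨?_, ?_⟩⟩
    · intro i j hij
      exact max_le_max (hmuP i j hij) (hshP i j hij)
    · intro j
      exact max_le (hsub j) (shiftP_le hlam j)
    · intro j h
      refine le_trans (le_of_eq ?_) (le_max_right (extendP mu ⟨j, by omega⟩) _)
      rw [shiftP_lt lam ⟨j, by omega⟩ (show j < n by omega)]
    · intro j
      exact le_max_left _ _
    · intro j h
      apply max_le
      · exact hmuP ⟨j, by omega⟩ ⟨j + 1, h⟩ (Fin.mk_le_mk.mpr (by omega))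
      · by_cases h2 : j + 2 < n + 1
        · rw [shiftP_lt lam ⟨j + 1, h⟩ (show j + 1 < n by omega)]
          rw [extendP_lt mu ⟨j, by omega⟩ (show j < n by omega)]
          exact hjump j h2
        · rw [shiftP_eq lam ⟨j + 1, h⟩ (show j + 1 = n by omega)]
          exact Nat.zero_le _
  · rintro ⟨nu, hnuP, hmunu, hnul, hHln, hHnm⟩ c
    have hsub : ∀ j, extendP mu j ≤ lam j := fun j => le_trans (hmunu j) (hnul j)
    have hjump : ∀ (j : ℕ) (h : j + 2 < n + 1), lam ⟨j + 2, h⟩ ≤ mu ⟨j, by omega⟩ := by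
      intro j h
      have h1 : lam ⟨j + 2, h⟩ ≤ nu ⟨j + 1, by omega⟩ := hHln.2 (j + 1) h
      have h2 : nu ⟨j + 1, by omega⟩ ≤ extendP mu ⟨j, by omega⟩ := hHnm.2 j (by omega)
      rw [extendP_lt mu ⟨j, by omega⟩ (show j < n by omega)] at h2
      exact le_trans h1 h2
    exact ⟨(dual1 hlam hmu hmub).2 hsub c, (dual2 hlam hlamb hmu).2 hjump c⟩

/-- For `λ ∈ Λ_{n+1}` with `λ ⊂ m^{n+1}` and `μ ∈ Λ_n` with `μ ⊂ m^n`,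
`(n^m − μ′) ∼_m ((n+1)^m − λ′)` in `Λ_m` iff `μ ⪯ λ` (in `Λ_{n+1}`). -/
theorem statement1 (m n : ℕ) (lam : Fin (n + 1) → ℕ) (hlam : IsPartition lam)
    (hlamb : SubDiag lam (rectP m (n + 1)))
    (mu : Fin n → ℕ) (hmu : IsPartition mu) (hmub : SubDiag mu (rectP m n)) :
    simRel m (complP n (conjP m mu)) (complP (n + 1) (conjP m lam)) ↔
      preceq (extendP mu) lam := by
  set a : Fin m → ℕ := complP n (conjP m mu) with ha
  set b : Fin m → ℕ := complP (n + 1) (conjP m lam) with hb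
  have haval : ∀ i : Fin m, a i = n - conjP m mu i.rev := fun i => rfl
  have hbval : ∀ i : Fin m, b i = (n + 1) - conjP m lam i.rev := fun i => rfl
  rw [← col_iff_preceq hlam hlamb hmu hmub]
  constructor
  · rintro ⟨nu, _, hnub, hnua, hVb, hVa, _⟩ c
    have e : (c.rev).rev = c := Fin.rev_rev c
    have h1 := hVa c.rev
    have h2 := hVb c.rev
    have h3 := hnua c.rev
    have h4 := hnub c.rev
    rw [haval c.rev, e] at h1 h3
    rw [hbval c.rev, e] at h2 h4
    have hKm : conjP m mu c ≤ n := conj_le_card mu c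
    have hKl : conjP m lam c ≤ n + 1 := conj_le_card lam c
    omega
  · intro hc
    have hparta : IsPartition a := by
      intro i j hij
      rw [haval, haval]
      exact Nat.sub_le_sub_left (conj_antitone mu (Fin.rev_le_rev.2 hij)) n
    have hpartb : IsPartition b := by
      intro i j hij
      rw [hbval, hbval]
      exact Nat.sub_le_sub_left (conj_antitone lam (Fin.rev_le_rev.2 hij)) (n + 1)
    have hdiff : ∀ i : Fin m, a i ≤ b i + 1 ∧ b i ≤ a i + 1 := by
      intro i
      have := hc i.rev
      have hKm : conjP m mu i.rev ≤ n := conj_le_card mu i.rev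
      have hKl : conjP m lam i.rev ≤ n + 1 := conj_le_card lam i.rev
      rw [haval, hbval]
      omega
    refine ⟨fun i => min (a i) (b i), ?_, fun i => min_le_right _ _, fun i => min_le_left _ _,
      fun i => ⟨min_le_right _ _, by have := hdiff i; show b i ≤ min (a i) (b i) + 1; omega⟩,
      fun i => ⟨min_le_left _ _, by have := hdiff i; show a i ≤ min (a i) (b i) + 1; omega⟩, ?_⟩
    · intro i j hij
      exact le_min (le_trans (min_le_left _ _) (hparta i j hij))
        (le_trans (min_le_right _ _) (hpartb i j hij))
    · unfold skewWt
      rw [← Finset.sum_add_distrib]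
      calc (∑ i : Fin m, ((b i - min (a i) (b i)) + (a i - min (a i) (b i))))
          ≤ ∑ _i : Fin m, 1 := by
            apply Finset.sum_le_sum
            intro i _
            have := hdiff i
            omega
        _ = m := by simp
end

section
/- Let μ, λ ∈ Λ_N with λ_1 ≤ m and μ_1 ≤ m. Then μ ⪯ λ if and only if μ ⊂ λ and λ′_i ≤ μ′_i + 2 for all 1 ≤ i ≤ m, where λ′, μ′ ∈ Λ_m are the conjugate partitions. -/
open Finset

lemma conj_char {N m : ℕ} (l : Fin N → ℕ) (hl : IsPartition l) (i : Fin m) (j : Fin N) :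
    (j : ℕ) < conjP m l i ↔ (i : ℕ) + 1 ≤ l j := by
  constructor
  · intro h
    by_contra hc
    push_neg at hc
    have hsub : (univ.filter fun j' : Fin N => (i : ℕ) + 1 ≤ l j') ⊆ Finset.Iio j := by
      intro j' hj'
      simp only [Finset.mem_filter, Finset.mem_univ, true_and] at hj'
      simp only [Finset.mem_Iio]
      by_contra hle
      push_neg at hle
      exact absurd (le_trans hj' (hl j j' hle)) (by omega)
    have hcard := Finset.card_le_card hsub
    rw [Fin.card_Iio] at hcard
    unfold conjP at h
    omega
  · intro h
    have hsub : Finset.Iic j ⊆ univ.filter fun j' : Fin N => (i : ℕ) + 1 ≤ l j' := by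
      intro j' hj'
      rw [Finset.mem_Iic] at hj'
      simp only [Finset.mem_filter, Finset.mem_univ, true_and]
      exact le_trans h (hl j' j hj')
    have hcard := Finset.card_le_card hsub
    rw [Fin.card_Iic] at hcard
    unfold conjP
    omega

lemma conj_le_N {N m : ℕ} (l : Fin N → ℕ) (i : Fin m) : conjP m l i ≤ N := by
  unfold conjP
  calc _ ≤ (univ : Finset (Fin N)).card := Finset.card_filter_le _ _
    _ = N := by simp

lemma hstrip_conj {N m : ℕ} (l ν : Fin N → ℕ) (hl : IsPartition l) (hν : IsPartition ν)
    (hs : HStrip l ν) (i : Fin m) : conjP m l i ≤ conjP m ν i + 1 := by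
  by_contra hc
  push_neg at hc
  set c := conjP m ν i with hcdef
  have h1 : c + 1 < N := lt_of_lt_of_le hc (conj_le_N l i)
  have h2 : (i : ℕ) + 1 ≤ l ⟨c + 1, h1⟩ := by
    rw [← conj_char l hl i]
    exact hc
  have h3 : l ⟨c + 1, h1⟩ ≤ ν ⟨c, by omega⟩ := hs.2 c h1
  have h4 : ((⟨c, by omega⟩ : Fin N) : ℕ) < conjP m ν i :=
    (conj_char ν hν i _).mpr (le_trans h2 h3)
  simp at h4
  omega

/-- For partitions `μ, λ ∈ Λ_N` with all parts `≤ m`, `μ ⪯ λ` iff `μ ⊂ λ`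
and `λ′_i ≤ μ′_i + 2` for all `1 ≤ i ≤ m`, where `λ′, μ′ ∈ Λ_m` are the conjugates. -/
theorem statement6 {N : ℕ} (m : ℕ) (mu lam : Fin N → ℕ) (hmu : IsPartition mu)
    (hlam : IsPartition lam) (hlamb : ∀ j, lam j ≤ m) (hmub : ∀ j, mu j ≤ m) :
    preceq mu lam ↔
      (SubDiag mu lam ∧ ∀ i : Fin m, conjP m lam i ≤ conjP m mu i + 2) := by
  constructor
  · rintro ⟨ν, hν, hmn, hnl, hsl, hsm⟩
    refine ⟨fun j => le_trans (hmn j) (hnl j), fun i => ?_⟩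
    have h1 := hstrip_conj lam ν hlam hν hsl i
    have h2 := hstrip_conj ν mu hν hmu hsm i
    omega
  · rintro ⟨hsub, hconj⟩
    set L : ℕ → ℕ := fun t => if h : t < N then lam ⟨t, h⟩ else 0 with hLdef
    have hLanti : ∀ s t : ℕ, s ≤ t → L t ≤ L s := by
      intro s t hst
      by_cases ht : t < N
      · have hs : s < N := lt_of_le_of_lt hst ht
        simp only [hLdef, dif_pos ht, dif_pos hs]
        exact hlam ⟨s, hs⟩ ⟨t, ht⟩ hst
      · simp only [hLdef, dif_neg ht]
        exact Nat.zero_le _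
    have hLeq : ∀ (j : Fin N), L (j : ℕ) = lam j := by
      intro j
      simp [hLdef, j.isLt]
    have hkey : ∀ (j : ℕ) (h : j < N), L (j + 2) ≤ mu ⟨j, h⟩ := by
      intro j hj
      by_cases h2 : j + 2 < N
      · simp only [hLdef, dif_pos h2]
        by_contra hc
        push_neg at hc
        have him : mu ⟨j, hj⟩ < m := lt_of_lt_of_le hc (hlamb _)
        set i : Fin m := ⟨mu ⟨j, hj⟩, him⟩ with hidef
        have ha : ((⟨j + 2, h2⟩ : Fin N) : ℕ) < conjP m lam i :=
          (conj_char lam hlam i _).mpr hc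
        have hb : ¬ ((⟨j, hj⟩ : Fin N) : ℕ) < conjP m mu i := by
          rw [conj_char mu hmu i]
          simp [hidef]
        have hcon := hconj i
        simp only at ha hb
        omega
      · simp only [hLdef, dif_neg h2]
        exact Nat.zero_le _
    refine ⟨fun j => max (mu j) (L ((j : ℕ) + 1)), ?_, ?_, ?_, ⟨?_, ?_⟩, ⟨?_, ?_⟩⟩
    · intro j j' hjj'
      exact max_le_max (hmu j j' hjj') (hLanti _ _ (by omega))
    · intro j
      exact le_max_left _ _
    · intro j
      exact max_le (hsub j) (by rw [← hLeq j]; exact hLanti _ _ (by omega))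
    · intro j
      exact max_le (hsub j) (by rw [← hLeq j]; exact hLanti _ _ (by omega))
    · intro j h
      have : L (j + 1) = lam ⟨j + 1, h⟩ := by simp [hLdef, h]
      rw [← this]
      exact le_max_right _ _
    · intro j
      exact le_max_left _ _
    · intro j h
      have hj : j < N := by omega
      refine max_le (hmu ⟨j, hj⟩ ⟨j + 1, h⟩ (by simp)) ?_
      exact hkey j hj
end
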